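/- The set ℚ × ℚ is dense in ℝ × ℝ with respect to the cross topology γ, and consequently non(nwd_γ) = ℵ₀ and add(nwd_γ) = ℵ₀. -/

import Mathlib

open Topology Set

/-- The cross topology `γ` on `ℝ × ℝ`: a set is open iff all of its vertical and
horizontal sections are open in `ℝ`. -/
def crossTopology : TopologicalSpace (ℝ × ℝ) where
  IsOpen G := (∀ x : ℝ, IsOpen {y : ℝ | (x, y) ∈ G}) ∧ (∀ y : ℝ, IsOpen {x : ℝ | (x, y) ∈ G})
  isOpen_univ := ⟨fun _ => isOpen_univ, fun _ => isOpen_univ⟩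
  isOpen_inter := fun A B hA hB =>
    ⟨fun x => (hA.1 x).inter (hB.1 x), fun y => (hA.2 y).inter (hB.2 y)⟩
  isOpen_sUnion := fun S hS => by
    constructor
    · intro x
      have h : {y : ℝ | (x, y) ∈ ⋃₀ S} = ⋃ G ∈ S, {y : ℝ | (x, y) ∈ G} := by
        ext y; simp
      rw [h]
      exact isOpen_biUnion fun G hG => (hS G hG).1 x
    · intro y
      have h : {x : ℝ | (x, y) ∈ ⋃₀ S} = ⋃ G ∈ S, {x : ℝ | (x, y) ∈ G} := by
        ext x; simp
      rw [h]
      exact isOpen_biUnion fun G hG => (hS G hG).2 y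

/-- The uniformity number of the ideal of nowhere dense subsets of `Z`: the least
cardinality of a subset of `Z` that is not nowhere dense. -/
noncomputable def nonNwd (Z : Type*) [TopologicalSpace Z] : Cardinal :=
  sInf {c : Cardinal | ∃ s : Set Z, Cardinal.mk s = c ∧ ¬ IsNowhereDense s}

/-- The additivity of the ideal of nowhere dense subsets of `Z`: the least cardinality
of a family of nowhere dense sets whose union is not nowhere dense. -/
noncomputable def addNwd (Z : Type*) [TopologicalSpace Z] : Cardinal :=
  sInf {c : Cardinal | ∃ W : Set (Set Z), Cardinal.mk W = c ∧
    (∀ s ∈ W, IsNowhereDense s) ∧ ¬ IsNowhereDense (⋃₀ W)}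

/- ### Auxiliary lemmas -/

lemma nwd_mono {X : Type*} [TopologicalSpace X] {s t : Set X} (h : s ⊆ t)
    (ht : IsNowhereDense t) : IsNowhereDense s := by
  unfold IsNowhereDense at *
  exact eq_empty_of_subset_empty (ht ▸ interior_mono (closure_mono h))

lemma nwd_union {X : Type*} [TopologicalSpace X] {s t : Set X} (hs : IsNowhereDense s)
    (ht : IsNowhereDense t) : IsNowhereDense (s ∪ t) := by
  have hs' : IsClosed (closure s) ∧ IsNowhereDense (closure s) := ⟨isClosed_closure, hs.closure⟩
  have ht' : IsClosed (closure t) ∧ IsNowhereDense (closure t) := ⟨isClosed_closure, ht.closure⟩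
  rw [isClosed_isNowhereDense_iff_compl] at hs' ht'
  have key : IsClosed (closure s ∪ closure t) ∧ IsNowhereDense (closure s ∪ closure t) := by
    rw [isClosed_isNowhereDense_iff_compl, compl_union]
    exact ⟨hs'.1.inter ht'.1, hs'.2.inter_of_isOpen_left ht'.2 hs'.1⟩
  exact nwd_mono (union_subset_union subset_closure subset_closure) key.2

lemma nwd_sUnion_finite {X : Type*} [TopologicalSpace X] {W : Set (Set X)} (hW : W.Finite)
    (h : ∀ s ∈ W, IsNowhereDense s) : IsNowhereDense (⋃₀ W) := by
  refine Set.Finite.induction_on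
      (motive := fun V _ => (∀ s ∈ V, IsNowhereDense s) → IsNowhereDense (⋃₀ V)) W hW
      (fun _ => by simp [isNowhereDense_empty]) ?_ h
  intro a V _ _ ih h'
  rw [sUnion_insert]
  exact nwd_union (h' _ (mem_insert _ _)) (ih fun s hs => h' s (mem_insert_of_mem _ hs))

lemma real_open_infinite {U : Set ℝ} (hU : IsOpen U) (hne : U.Nonempty) : U.Infinite := by
  obtain ⟨x, hx⟩ := hne
  obtain ⟨ε, hε, hball⟩ := Metric.isOpen_iff.1 hU x hx
  have hsub : Set.Ioo (x - ε) (x + ε) ⊆ U := by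
    rw [← Real.ball_eq_Ioo]; exact hball
  exact (Set.Ioo_infinite (by linarith : x - ε < x + ε)).mono hsub

/-- Finite subsets of `(ℝ × ℝ, γ)` are nowhere dense. -/
lemma cross_finite_nwd {s : Set (ℝ × ℝ)} (hs : s.Finite) :
    @IsNowhereDense (ℝ × ℝ) crossTopology s := by
  letI : TopologicalSpace (ℝ × ℝ) := crossTopology
  have hclosed : @IsClosed (ℝ × ℝ) crossTopology s := by
    rw [← isOpen_compl_iff]
    constructor
    · intro x
      have hfin : {y : ℝ | (x, y) ∈ s}.Finite :=
        (hs.image Prod.snd).subset (fun y hy => ⟨(x, y), hy, rfl⟩)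
      have : {y : ℝ | (x, y) ∈ sᶜ} = {y : ℝ | (x, y) ∈ s}ᶜ := rfl
      rw [this, isOpen_compl_iff]
      exact hfin.isClosed
    · intro y
      have hfin : {x : ℝ | (x, y) ∈ s}.Finite :=
        (hs.image Prod.fst).subset (fun x hx => ⟨(x, y), hx, rfl⟩)
      have : {x : ℝ | (x, y) ∈ sᶜ} = {x : ℝ | (x, y) ∈ s}ᶜ := rfl
      rw [this, isOpen_compl_iff]
      exact hfin.isClosed
  have hint : @interior (ℝ × ℝ) crossTopology s = ∅ := by
    rw [eq_empty_iff_forall_notMem]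
    rintro ⟨x, y⟩ hp
    obtain ⟨U, hUs, hUopen, hpU⟩ := mem_interior.1 hp
    have h1 : IsOpen {y' : ℝ | (x, y') ∈ U} := hUopen.1 x
    have hinf : {y' : ℝ | (x, y') ∈ U}.Infinite := real_open_infinite h1 ⟨y, hpU⟩
    have hfin : {y' : ℝ | (x, y') ∈ s}.Finite :=
      (hs.image Prod.snd).subset (fun y' hy' => ⟨(x, y'), hy', rfl⟩)
    exact hinf (hfin.subset fun y' hy' => hUs hy')
  exact hclosed.isNowhereDense_iff.2 hint

/-- `ℚ × ℚ` is dense in the cross topology. -/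
lemma cross_dense :
    @Dense (ℝ × ℝ) crossTopology {p : ℝ × ℝ | ∃ q r : ℚ, p = ((q : ℝ), (r : ℝ))} := by
  letI : TopologicalSpace (ℝ × ℝ) := crossTopology
  rw [dense_iff_inter_open]
  rintro U hU ⟨⟨x, y⟩, hxy⟩
  have h1 : IsOpen {y' : ℝ | (x, y') ∈ U} := hU.1 x
  obtain ⟨z, hzU, r, hr⟩ :=
    dense_iff_inter_open.1 Rat.denseRange_cast _ h1 ⟨y, hxy⟩
  have hxr : (x, (r : ℝ)) ∈ U := by rw [hr]; exact hzU
  have h2 : IsOpen {x' : ℝ | (x', (r : ℝ)) ∈ U} := hU.2 (r : ℝ)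
  obtain ⟨w, hwU, q, hq⟩ :=
    dense_iff_inter_open.1 Rat.denseRange_cast _ h2 ⟨x, hxr⟩
  refine ⟨((q : ℝ), (r : ℝ)), ?_, ⟨q, r, rfl⟩⟩
  rw [hq]; exact hwU

lemma cross_not_nwd_ratsq :
    ¬ @IsNowhereDense (ℝ × ℝ) crossTopology {p : ℝ × ℝ | ∃ q r : ℚ, p = ((q : ℝ), (r : ℝ))} := by
  letI : TopologicalSpace (ℝ × ℝ) := crossTopology
  intro h
  unfold IsNowhereDense at h
  rw [cross_dense.closure_eq, interior_univ] at h
  exact (univ_nonempty).ne_empty h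

/-- `ℚ × ℚ` as a set of `ℝ × ℝ` is the range of an injective map on `ℚ × ℚ`. -/
lemma ratsq_eq_range :
    {p : ℝ × ℝ | ∃ q r : ℚ, p = ((q : ℝ), (r : ℝ))} =
      Set.range (fun qr : ℚ × ℚ => (((qr.1 : ℝ), (qr.2 : ℝ)) : ℝ × ℝ)) := by
  ext ⟨a, b⟩
  constructor
  · rintro ⟨q, r, h⟩; exact ⟨(q, r), h.symm⟩
  · rintro ⟨⟨q, r⟩, h⟩; exact ⟨q, r, h.symm⟩

lemma ratsq_inj :
    Function.Injective (fun qr : ℚ × ℚ => (((qr.1 : ℝ), (qr.2 : ℝ)) : ℝ × ℝ)) := by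
  rintro ⟨a, b⟩ ⟨c, d⟩ h
  simp only [Prod.mk.injEq, Rat.cast_injective.eq_iff] at h
  exact Prod.ext h.1 h.2

/-- `ℚ × ℚ` is dense in `(ℝ × ℝ, γ)`, and consequently `non(nwd_γ) = ℵ₀` and
`add(nwd_γ) = ℵ₀`. -/
theorem rat_sq_dense_cross_and_invariants :
    @Dense (ℝ × ℝ) crossTopology {p : ℝ × ℝ | ∃ q r : ℚ, p = ((q : ℝ), (r : ℝ))} ∧
    @nonNwd (ℝ × ℝ) crossTopology = Cardinal.aleph0 ∧
    @addNwd (ℝ × ℝ) crossTopology = Cardinal.aleph0 := by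
  letI : TopologicalSpace (ℝ × ℝ) := crossTopology
  set S : Set (ℝ × ℝ) := {p : ℝ × ℝ | ∃ q r : ℚ, p = ((q : ℝ), (r : ℝ))} with hS
  have hmkS : Cardinal.mk S = Cardinal.aleph0 := by
    rw [hS, ratsq_eq_range, Cardinal.mk_range_eq _ ratsq_inj, Cardinal.mk_eq_aleph0]
  refine ⟨cross_dense, ?_, ?_⟩
  · -- nonNwd
    apply IsLeast.csInf_eq
    constructor
    · exact ⟨S, hmkS, cross_not_nwd_ratsq⟩
    · rintro c ⟨s, hmk, hnwd⟩
      by_contra hlt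
      rw [not_le] at hlt
      have : s.Finite := by
        rw [← Cardinal.lt_aleph0_iff_set_finite, hmk]; exact hlt
      exact hnwd (cross_finite_nwd this)
  · -- addNwd
    apply IsLeast.csInf_eq
    constructor
    · refine ⟨Set.range (fun qr : ℚ × ℚ =>
        ({(((qr.1 : ℝ), (qr.2 : ℝ)) : ℝ × ℝ)} : Set (ℝ × ℝ))), ?_, ?_, ?_⟩
      · rw [Cardinal.mk_range_eq, Cardinal.mk_eq_aleph0]
        intro a b h
        exact ratsq_inj (Set.singleton_eq_singleton_iff.1 h)
      · rintro s ⟨⟨q, r⟩, rfl⟩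
        exact cross_finite_nwd (finite_singleton _)
      · have : ⋃₀ Set.range (fun qr : ℚ × ℚ =>
            ({(((qr.1 : ℝ), (qr.2 : ℝ)) : ℝ × ℝ)} : Set (ℝ × ℝ))) = S := by
          ext ⟨a, b⟩
          simp only [mem_sUnion, Set.mem_range, hS]
          constructor
          · rintro ⟨t, ⟨⟨q, r⟩, rfl⟩, ht⟩
            exact ⟨q, r, ht⟩
          · rintro ⟨q, r, h⟩
            exact ⟨_, ⟨(q, r), rfl⟩, h⟩
        rw [this]
        exact cross_not_nwd_ratsq
    · rintro c ⟨W, hmk, hWnwd, hU⟩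
      by_contra hlt
      rw [not_le] at hlt
      have : W.Finite := by
        rw [← Cardinal.lt_aleph0_iff_set_finite, hmk]; exact hlt
      exact hU (nwd_sUnion_finite this hWnwd)
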